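/- In the algebra Dist((G_m)_1) over a field K of characteristic p (spanned by the elements binom(x, k) for 0 ≤ k < p, with multiplication binom(x,a)·binom(x,b) = ∑_{i=0}^{min(a,b)} C(a+b-i, a-i)·C(b, b-i)·binom(x, a+b-i), where binom(x,k) = 0 for k ≥ p), the elements X_a = ∑_{k=a}^{p-1} (-1)^{k-a} C(k,a) binom(x,k) for 0 ≤ a < p satisfy: binom(x,a)·X_a = X_a, and binom(x,j)·X_a = 0 for all j > a. -/

import Mathlib

open Finset

/-- The distribution algebra `Dist((G_m)_1)`: elements are coefficient vectors with respect to
the basis `binom(x,k)`, `0 ≤ k < p`, with multiplication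
`binom(x,a)·binom(x,b) = ∑_{i=0}^{min(a,b)} C(a+b-i,a-i) C(b,b-i) binom(x,a+b-i)`,
terms `binom(x,m)` with `m ≥ p` omitted. -/
noncomputable def dmul (p : ℕ) {K : Type*} [Field K] (f g : Fin p → K) : Fin p → K :=
  fun m => ∑ a : Fin p, ∑ b : Fin p, ∑ i ∈ Finset.range (min a.1 b.1 + 1),
    if a.1 + b.1 - i = m.1 then
      (Nat.choose (a.1 + b.1 - i) (a.1 - i) : K) * (Nat.choose b.1 (b.1 - i) : K) * f a * g b
    else 0

/-- The basis element `binom(x,k)`. -/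
def bas (p : ℕ) {K : Type*} [Field K] (k : Fin p) : Fin p → K :=
  fun m => if m = k then 1 else 0

/-- The element `X_a = ∑_{k=a}^{p-1} (-1)^{k-a} C(k,a) binom(x,k)`. -/
def Xel (p : ℕ) {K : Type*} [Field K] (a : Fin p) : Fin p → K :=
  fun k => if a ≤ k then (-1 : K) ^ (k.1 - a.1) * (Nat.choose k.1 a.1 : K) else 0

section aux
variable {p : ℕ} {K : Type*} [Field K]

/-- Evaluation at `t`: `f ↦ ∑ f k * C(t,k)`. -/
noncomputable def evD (p : ℕ) {K : Type*} [Field K] (t : ℕ) (f : Fin p → K) : K :=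
  ∑ k : Fin p, f k * (Nat.choose t k.1 : K)

lemma term_id {t a b i : ℕ} (hia : i ≤ a) (hib : i ≤ b) (hat : a ≤ t) :
    (a + b - i).choose (a - i) * b.choose (b - i) * t.choose (a + b - i)
      = a.choose i * (t.choose a * (t - a).choose (b - i)) := by
  rcases le_or_gt (a + b - i) t with h | h
  · have h2 := Nat.choose_mul (n := a + b - i) (show a - i ≤ a by omega)
    rw [show a + b - i - (a - i) = b by omega, show a - (a - i) = i by omega] at h2
    have h1 := Nat.choose_mul (n := t) (show a ≤ a + b - i by omega)
    rw [show a + b - i - a = b - i by omega] at h1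
    have hsymm : a.choose (a - i) = a.choose i := Nat.choose_symm hia
    have hsymm' : b.choose (b - i) = b.choose i := Nat.choose_symm hib
    calc (a + b - i).choose (a - i) * b.choose (b - i) * t.choose (a + b - i)
        = (a + b - i).choose (a - i) * b.choose i * t.choose (a + b - i) := by rw [hsymm']
      _ = ((a + b - i).choose a * a.choose (a - i)) * t.choose (a + b - i) := by rw [h2]
      _ = a.choose (a - i) * (t.choose (a + b - i) * (a + b - i).choose a) := by ring
      _ = a.choose i * (t.choose a * (t - a).choose (b - i)) := by rw [h1, hsymm]
  · rw [Nat.choose_eq_zero_of_lt h, Nat.choose_eq_zero_of_lt (show t - a < b - i by omega)]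
    simp

lemma key_nat (t a b : ℕ) :
    ∑ i ∈ range (min a b + 1),
        (a + b - i).choose (a - i) * b.choose (b - i) * t.choose (a + b - i)
      = t.choose a * t.choose b := by
  rcases lt_or_ge t a with h | h
  · rw [Nat.choose_eq_zero_of_lt h, Nat.zero_mul]
    refine sum_eq_zero fun i hi => ?_
    simp only [mem_range] at hi
    rw [Nat.choose_eq_zero_of_lt (show t < a + b - i by omega), Nat.mul_zero]
  · have hv : t.choose b = ∑ i ∈ range (b + 1), a.choose i * (t - a).choose (b - i) := by
      have hV := Nat.add_choose_eq a (t - a) b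
      rw [Nat.add_sub_cancel' h] at hV
      rw [hV, Finset.Nat.sum_antidiagonal_eq_sum_range_succ_mk]
    rw [hv, Finset.mul_sum]
    calc ∑ i ∈ range (min a b + 1),
          (a + b - i).choose (a - i) * b.choose (b - i) * t.choose (a + b - i)
        = ∑ i ∈ range (min a b + 1), a.choose i * (t.choose a * (t - a).choose (b - i)) := by
          refine sum_congr rfl fun i hi => ?_
          simp only [mem_range] at hi
          exact term_id (by omega) (by omega) h
      _ = ∑ i ∈ range (b + 1), a.choose i * (t.choose a * (t - a).choose (b - i)) := by
          refine Finset.sum_subset (Finset.range_subset_range.mpr (by omega)) fun i hi hni => ?_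
          simp only [mem_range] at hi hni
          rw [Nat.choose_eq_zero_of_lt (show a < i by omega)]
          simp
      _ = ∑ i ∈ range (b + 1), t.choose a * (a.choose i * (t - a).choose (b - i)) := by
          refine sum_congr rfl fun i _ => ?_; ring

lemma evD_mul {t : ℕ} (ht : t < p) (f g : Fin p → K) :
    evD p t (dmul p f g) = evD p t f * evD p t g := by
  unfold evD dmul
  rw [Finset.sum_mul_sum]
  simp only [Finset.sum_mul]
  rw [Finset.sum_comm]
  refine sum_congr rfl fun a _ => ?_
  rw [Finset.sum_comm]
  refine sum_congr rfl fun b _ => ?_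
  calc (∑ m : Fin p, ∑ i ∈ range (min a.1 b.1 + 1),
          (if a.1 + b.1 - i = m.1 then
            ((a.1 + b.1 - i).choose (a.1 - i) : K) * (b.1.choose (b.1 - i) : K) * f a * g b
          else 0) * (t.choose m.1 : K))
      = ∑ m : Fin p, ∑ i ∈ range (min a.1 b.1 + 1),
          if a.1 + b.1 - i = m.1 then
            ((a.1 + b.1 - i).choose (a.1 - i) : K) * (b.1.choose (b.1 - i) : K)
              * (t.choose (a.1 + b.1 - i) : K) * (f a * g b)
          else 0 := by
        refine sum_congr rfl fun m _ => sum_congr rfl fun i _ => ?_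
        split
        · next h => rw [h]; ring
        · rw [zero_mul]
    _ = ∑ i ∈ range (min a.1 b.1 + 1), ∑ m : Fin p,
          if a.1 + b.1 - i = m.1 then
            ((a.1 + b.1 - i).choose (a.1 - i) : K) * (b.1.choose (b.1 - i) : K)
              * (t.choose (a.1 + b.1 - i) : K) * (f a * g b)
          else 0 := Finset.sum_comm
    _ = ∑ i ∈ range (min a.1 b.1 + 1),
          ((a.1 + b.1 - i).choose (a.1 - i) : K) * (b.1.choose (b.1 - i) : K)
            * (t.choose (a.1 + b.1 - i) : K) * (f a * g b) := by
        refine sum_congr rfl fun i hi => ?_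
        rcases lt_or_ge (a.1 + b.1 - i) p with hlt | hge
        · rw [Fintype.sum_eq_single (⟨a.1 + b.1 - i, hlt⟩ : Fin p)]
          · simp
          · intro m hm
            rw [if_neg]
            exact fun hc => hm (Fin.ext hc.symm)
        · have h0 : (t.choose (a.1 + b.1 - i) : K) = 0 := by
            rw [Nat.choose_eq_zero_of_lt (by omega)]; exact Nat.cast_zero
          rw [h0]
          simp
    _ = f a * (t.choose a.1 : K) * (g b * (t.choose b.1 : K)) := by
        have := key_nat t a.1 b.1
        calc ∑ i ∈ range (min a.1 b.1 + 1),
              ((a.1 + b.1 - i).choose (a.1 - i) : K) * (b.1.choose (b.1 - i) : K)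
                * (t.choose (a.1 + b.1 - i) : K) * (f a * g b)
            = (∑ i ∈ range (min a.1 b.1 + 1),
                (((a.1 + b.1 - i).choose (a.1 - i) * b.1.choose (b.1 - i)
                  * t.choose (a.1 + b.1 - i) : ℕ) : K)) * (f a * g b) := by
              rw [Finset.sum_mul]; push_cast
              exact sum_congr rfl fun i _ => by ring
            _ = ((t.choose a.1 * t.choose b.1 : ℕ) : K) * (f a * g b) := by rw [← this]; push_cast; ring_nf
            _ = f a * (t.choose a.1 : K) * (g b * (t.choose b.1 : K)) := by push_cast; ring

lemma evD_bas (t : ℕ) (j : Fin p) : evD p t (bas p (K := K) j) = (t.choose j.1 : K) := by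
  unfold evD bas
  simp

lemma alt_sum_K (n : ℕ) :
    (∑ j ∈ range (n + 1), (-1 : K) ^ j * (n.choose j : K)) = if n = 0 then 1 else 0 := by
  have h := Int.alternating_sum_range_choose (n := n)
  have h2 := congrArg (Int.cast : ℤ → K) h
  push_cast at h2
  rw [h2]

lemma evD_Xel {t : ℕ} (ht : t < p) (a : Fin p) :
    evD p t (Xel p (K := K) a) = if t = a.1 then 1 else 0 := by
  unfold evD Xel
  have hfun : ∀ k : Fin p,
      (if a ≤ k then (-1 : K) ^ (k.1 - a.1) * (k.1.choose a.1 : K) else 0) * (t.choose k.1 : K)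
      = (fun n : ℕ => (if a.1 ≤ n then (-1 : K) ^ (n - a.1) * (n.choose a.1 : K) else 0)
          * (t.choose n : K)) k.1 := fun k => by simp only [Fin.le_def]
  have hre := Fin.sum_univ_eq_sum_range
    (fun n : ℕ => (if a.1 ≤ n then (-1 : K) ^ (n - a.1) * (n.choose a.1 : K) else 0)
      * (t.choose n : K)) p
  rw [Finset.sum_congr rfl fun k _ => hfun k, hre]
  rcases lt_or_ge t a.1 with hta | hta
  · rw [if_neg (by omega)]
    refine sum_eq_zero fun k hk => ?_
    rcases lt_or_ge k a.1 with hk1 | hk1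
    · rw [if_neg (by omega), zero_mul]
    · rw [show t.choose k = 0 from Nat.choose_eq_zero_of_lt (by omega), Nat.cast_zero, mul_zero]
  · have hIcc : ∑ n ∈ range p,
          (if a.1 ≤ n then (-1 : K) ^ (n - a.1) * (n.choose a.1 : K) else 0) * (t.choose n : K)
        = ∑ n ∈ Ico a.1 (t + 1),
          (if a.1 ≤ n then (-1 : K) ^ (n - a.1) * (n.choose a.1 : K) else 0)
            * (t.choose n : K) := by
      refine (Finset.sum_subset ?_ fun n hn hn2 => ?_).symm
      · intro n hn
        simp only [mem_Ico] at hn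
        simp only [mem_range]
        omega
      · simp only [mem_Ico, mem_range, not_and, not_lt] at hn hn2
        rcases lt_or_ge n a.1 with h1 | h1
        · rw [if_neg (by omega), zero_mul]
        · rw [show t.choose n = 0 from Nat.choose_eq_zero_of_lt (by omega), Nat.cast_zero,
            mul_zero]
    rw [hIcc, Finset.sum_Ico_eq_sum_range]
    have hterm : ∀ j ∈ range (t + 1 - a.1),
        (if a.1 ≤ a.1 + j then (-1 : K) ^ (a.1 + j - a.1) * ((a.1 + j).choose a.1 : K) else 0)
          * (t.choose (a.1 + j) : K)
        = (t.choose a.1 : K) * ((-1 : K) ^ j * ((t - a.1).choose j : K)) := by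
      intro j hj
      simp only [mem_range] at hj
      rw [if_pos (Nat.le_add_right _ _), Nat.add_sub_cancel_left]
      have hc := Nat.choose_mul (n := t) (show a.1 ≤ a.1 + j by omega)
      rw [Nat.add_sub_cancel_left] at hc
      calc (-1 : K) ^ j * ((a.1 + j).choose a.1 : K) * (t.choose (a.1 + j) : K)
          = (-1 : K) ^ j * ((t.choose (a.1 + j) * (a.1 + j).choose a.1 : ℕ) : K) := by
            push_cast; ring
        _ = (-1 : K) ^ j * ((t.choose a.1 * (t - a.1).choose j : ℕ) : K) := by rw [hc]
        _ = (t.choose a.1 : K) * ((-1 : K) ^ j * ((t - a.1).choose j : K)) := by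
            push_cast; ring
    rw [Finset.sum_congr rfl hterm, ← Finset.mul_sum,
        show t + 1 - a.1 = (t - a.1) + 1 by omega, alt_sum_K]
    rcases Nat.eq_or_lt_of_le hta with heq | hlt
    · rw [if_pos (by omega), if_pos (by omega), ← heq, Nat.choose_self]
      simp
    · rw [if_neg (by omega), if_neg (by omega), mul_zero]

lemma evD_inj (f g : Fin p → K) (h : ∀ t : Fin p, evD p t.1 f = evD p t.1 g) : f = g := by
  funext m
  suffices H : ∀ n, ∀ hn : n < p, f ⟨n, hn⟩ = g ⟨n, hn⟩ by
    have := H m.1 m.2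
    simpa using this
  intro n
  induction n using Nat.strong_induction_on with
  | _ n IH =>
    intro hn
    have h1 := h ⟨n, hn⟩
    unfold evD at h1
    rw [← Finset.add_sum_erase _ _ (mem_univ (⟨n, hn⟩ : Fin p)),
        ← Finset.add_sum_erase _ (fun k => g k * (Nat.choose n k.1 : K))
          (mem_univ (⟨n, hn⟩ : Fin p))] at h1
    have h2 : ∑ k ∈ univ.erase (⟨n, hn⟩ : Fin p), f k * (n.choose k.1 : K)
        = ∑ k ∈ univ.erase (⟨n, hn⟩ : Fin p), g k * (n.choose k.1 : K) := by
      refine sum_congr rfl fun k hk => ?_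
      rcases lt_trichotomy k.1 n with hlt | heq | hgt
      · have := IH k.1 hlt k.2
        simp only [Fin.eta] at this
        rw [this]
      · exact absurd (Fin.ext heq) (mem_erase.mp hk).1
      · rw [Nat.choose_eq_zero_of_lt hgt, Nat.cast_zero, mul_zero, mul_zero]
    rw [h2] at h1
    have h3 := add_right_cancel h1
    simpa [Nat.choose_self] using h3


end aux

theorem stmt_5 {p : ℕ} (hp : p.Prime) {K : Type*} [Field K] [CharP K p] (a : Fin p) :
    dmul p (bas p (K := K) a) (Xel p a) = Xel p a ∧
      ∀ j : Fin p, a < j → dmul p (bas p (K := K) j) (Xel p a) = 0 := by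
  constructor
  · refine evD_inj _ _ fun t => ?_
    rw [evD_mul t.2, evD_bas, evD_Xel t.2]
    by_cases h : t.1 = a.1
    · rw [if_pos h, mul_one, h, Nat.choose_self, Nat.cast_one]
    · rw [if_neg h, mul_zero]
  · intro j hj
    refine evD_inj _ _ fun t => ?_
    rw [evD_mul t.2, evD_bas, evD_Xel t.2]
    have hz : evD p t.1 (0 : Fin p → K) = 0 := by unfold evD; simp
    rw [hz]
    by_cases h : t.1 = a.1
    · rw [if_pos h, mul_one, h, Nat.choose_eq_zero_of_lt hj, Nat.cast_zero]
    · rw [if_neg h, mul_zero]
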